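/- Fix real numbers β and γ with 1 > β > γ > 0 and parameters p, q ∈ (0,1). Let (X_n)_{n∈ℕ} and (Y_n)_{n∈ℕ} be mutually independent sequences of random variables with X_n i.i.d. Bernoulli(p) and Y_n i.i.d. Bernoulli(q), and fix nonnegative reals s0, s1, s2, s3. Define for each n the value estimates v_H(n) = β·(s0 + Σ_{i<n} X_i Y_i)/(s0 + s1 + Σ_{i<n} X_i) and v_L(n) = (s2 + Σ_{i<n} (1−X_i)·Y_i + γ·(s3 + Σ_{i<n} (1−X_i)(1−Y_i)))/(s2 + s3 + Σ_{i<n} (1−X_i)). Then almost surely there exists N such that for all n ≥ N, v_L(n) > v_H(n). (Hence in any fixed regime of target policies, the epsilon-greedy value estimates are eventually pushed away from those that induce the collusive target policy (H,H).) -/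

import Mathlib

open MeasureTheory ProbabilityTheory Filter Topology

section Bern
variable {Ω : Type*} [MeasurableSpace Ω] (μ : Measure Ω) [IsProbabilityMeasure μ]

omit [MeasurableSpace Ω] in
lemma bern_eq_indicator (Z : Ω → ℝ) (h01 : ∀ ω, Z ω = 0 ∨ Z ω = 1) :
    Z = Set.indicator {ω | Z ω = 1} (fun _ => (1:ℝ)) := by
  funext ω
  rcases h01 ω with h | h <;> simp [Set.indicator_apply, h]

lemma bern_integrable (Z : Ω → ℝ) (hZ : Measurable Z) (h01 : ∀ ω, Z ω = 0 ∨ Z ω = 1) :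
    Integrable Z μ := by
  rw [bern_eq_indicator Z h01]
  exact (integrable_const (1:ℝ)).indicator (hZ (measurableSet_singleton 1))

omit [IsProbabilityMeasure μ] in
lemma bern_integral (Z : Ω → ℝ) (hZ : Measurable Z) (h01 : ∀ ω, Z ω = 0 ∨ Z ω = 1) :
    ∫ ω, Z ω ∂μ = (μ {ω | Z ω = 1}).toReal := by
  conv_lhs => rw [bern_eq_indicator Z h01]
  rw [integral_indicator_const (1:ℝ) (show MeasurableSet {ω | Z ω = 1} from hZ (measurableSet_singleton 1))]
  simp [Measure.real]

lemma bern_identDistrib (Z W : Ω → ℝ) (hZ : Measurable Z) (hW : Measurable W)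
    (hZ01 : ∀ ω, Z ω = 0 ∨ Z ω = 1) (hW01 : ∀ ω, W ω = 0 ∨ W ω = 1)
    (h : μ {ω | Z ω = 1} = μ {ω | W ω = 1}) : IdentDistrib Z W μ μ := by
  refine ⟨hZ.aemeasurable, hW.aemeasurable, ?_⟩
  refine Measure.ext fun s hs => ?_
  rw [Measure.map_apply hZ hs, Measure.map_apply hW hs]
  classical
  have key : ∀ (V : Ω → ℝ), (∀ ω, V ω = 0 ∨ V ω = 1) →
      V ⁻¹' s = if (1:ℝ) ∈ s then (if (0:ℝ) ∈ s then Set.univ else {ω | V ω = 1})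
        else (if (0:ℝ) ∈ s then {ω | V ω = 1}ᶜ else ∅) := by
    intro V h01
    ext ω
    rcases h01 ω with hv | hv <;>
      · by_cases h1 : (1:ℝ) ∈ s <;> by_cases h0 : (0:ℝ) ∈ s <;>
          simp [hv, h1, h0]
  rw [key Z hZ01, key W hW01]
  have hZm : MeasurableSet {ω | Z ω = 1} := hZ (measurableSet_singleton 1)
  have hWm : MeasurableSet {ω | W ω = 1} := hW (measurableSet_singleton 1)
  by_cases h1 : (1:ℝ) ∈ s <;> by_cases h0 : (0:ℝ) ∈ s <;>
    simp [h1, h0, measure_compl hZm (measure_ne_top μ _),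
      measure_compl hWm (measure_ne_top μ _), h]

end Bern

private lemma div_ratio_aux (a b c : ℝ) (hc : c ≠ 0) : (a / c) / (b / c) = a / b := by
  rcases eq_or_ne b 0 with hb | hb
  · simp [hb]
  · field_simp

/-- Regime analysis in Proposition 3 of the paper: with `1 > β > γ > 0`,
`p, q ∈ (0,1)`, mutually independent sequences `(X_n)` i.i.d. Bernoulli(`p`)
and `(Y_n)` i.i.d. Bernoulli(`q`), and nonnegative prior outcome counts
`s0, s1, s2, s3`, almost surely the value estimate of L eventually strictly
exceeds the value estimate of H: the epsilon-greedy value estimates are pushed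
away from those inducing the collusive target policy. -/
theorem stmt13 {Ω : Type*} [MeasurableSpace Ω] (μ : Measure Ω) [IsProbabilityMeasure μ]
    (β γ : ℝ) (hβ1 : β < 1) (hγβ : γ < β) (hγ0 : 0 < γ)
    (X Y : ℕ → Ω → ℝ) (p q : ℝ) (hp0 : 0 < p) (hp1 : p < 1) (hq0 : 0 < q) (hq1 : q < 1)
    (hXmeas : ∀ n, Measurable (X n)) (hYmeas : ∀ n, Measurable (Y n))
    (hX01 : ∀ n ω, X n ω = 0 ∨ X n ω = 1) (hY01 : ∀ n ω, Y n ω = 0 ∨ Y n ω = 1)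
    (hXp : ∀ n, μ {ω | X n ω = 1} = ENNReal.ofReal p)
    (hYq : ∀ n, μ {ω | Y n ω = 1} = ENNReal.ofReal q)
    (hindep : iIndepFun (Sum.elim X Y) μ)
    (s0 s1 s2 s3 : ℝ) (hs0 : 0 ≤ s0) (hs1 : 0 ≤ s1) (hs2 : 0 ≤ s2) (hs3 : 0 ≤ s3) :
    ∀ᵐ ω ∂μ, ∃ N : ℕ, ∀ n : ℕ, N ≤ n →
      (s2 + ∑ i ∈ Finset.range n, (1 - X i ω) * Y i ω +
          γ * (s3 + ∑ i ∈ Finset.range n, (1 - X i ω) * (1 - Y i ω))) /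
        (s2 + s3 + ∑ i ∈ Finset.range n, (1 - X i ω)) >
      β * (s0 + ∑ i ∈ Finset.range n, X i ω * Y i ω) /
        (s0 + s1 + ∑ i ∈ Finset.range n, X i ω) := by
  have hFmeas : ∀ i, Measurable (Sum.elim X Y i) := by
    rintro (i | i)
    · exact hXmeas i
    · exact hYmeas i
  -- the five sequences
  set A : ℕ → Ω → ℝ := fun i ω => X i ω * Y i ω with hAdef
  set B : ℕ → Ω → ℝ := fun i ω => X i ω with hBdef
  set C : ℕ → Ω → ℝ := fun i ω => (1 - X i ω) * Y i ω with hCdef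
  set D : ℕ → Ω → ℝ := fun i ω => (1 - X i ω) * (1 - Y i ω) with hDdef
  set E : ℕ → Ω → ℝ := fun i ω => 1 - X i ω with hEdef
  -- measurability
  have hAm : ∀ i, Measurable (A i) := fun i => (hXmeas i).mul (hYmeas i)
  have hBm : ∀ i, Measurable (B i) := hXmeas
  have hCm : ∀ i, Measurable (C i) := fun i => ((measurable_const.sub (hXmeas i)).mul (hYmeas i))
  have hDm : ∀ i, Measurable (D i) :=
    fun i => ((measurable_const.sub (hXmeas i)).mul (measurable_const.sub (hYmeas i)))
  have hEm : ∀ i, Measurable (E i) := fun i => measurable_const.sub (hXmeas i)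
  -- 0/1-valued
  have hA01 : ∀ i ω, A i ω = 0 ∨ A i ω = 1 := by
    intro i ω; rcases hX01 i ω with h | h <;> rcases hY01 i ω with h' | h' <;>
      simp [hAdef, h, h']
  have hC01 : ∀ i ω, C i ω = 0 ∨ C i ω = 1 := by
    intro i ω; rcases hX01 i ω with h | h <;> rcases hY01 i ω with h' | h' <;>
      simp [hCdef, h, h']
  have hD01 : ∀ i ω, D i ω = 0 ∨ D i ω = 1 := by
    intro i ω; rcases hX01 i ω with h | h <;> rcases hY01 i ω with h' | h' <;>
      simp [hDdef, h, h']
  have hE01 : ∀ i ω, E i ω = 0 ∨ E i ω = 1 := by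
    intro i ω; rcases hX01 i ω with h | h <;> simp [hEdef, h]
  -- complement measures
  have hX0 : ∀ i, μ {ω | X i ω = 0} = ENNReal.ofReal (1 - p) := by
    intro i
    have hset : {ω | X i ω = 0} = {ω | X i ω = 1}ᶜ := by
      ext ω; rcases hX01 i ω with h | h <;> simp [h]
    rw [hset, measure_compl (show MeasurableSet {ω | X i ω = 1} from (hXmeas i) (measurableSet_singleton 1)) (measure_ne_top μ _),
      hXp i, measure_univ, ENNReal.ofReal_sub 1 hp0.le, ENNReal.ofReal_one]
  have hY0 : ∀ i, μ {ω | Y i ω = 0} = ENNReal.ofReal (1 - q) := by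
    intro i
    have hset : {ω | Y i ω = 0} = {ω | Y i ω = 1}ᶜ := by
      ext ω; rcases hY01 i ω with h | h <;> simp [h]
    rw [hset, measure_compl (show MeasurableSet {ω | Y i ω = 1} from (hYmeas i) (measurableSet_singleton 1)) (measure_ne_top μ _),
      hYq i, measure_univ, ENNReal.ofReal_sub 1 hq0.le, ENNReal.ofReal_one]
  -- independence of X i and Y i
  have hXYindep : ∀ i j : ℕ, IndepFun (X i) (Y j) μ := fun i j =>
    hindep.indepFun (show (Sum.inl i : ℕ ⊕ ℕ) ≠ Sum.inr j by simp)
  -- measures of the events {· = 1}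
  have hA1 : ∀ i, μ {ω | A i ω = 1} = ENNReal.ofReal (p * q) := by
    intro i
    have hset : {ω | A i ω = 1} = X i ⁻¹' {1} ∩ Y i ⁻¹' {1} := by
      ext ω; rcases hX01 i ω with h | h <;> rcases hY01 i ω with h' | h' <;>
        simp [hAdef, h, h']
    rw [hset, (hXYindep i i).measure_inter_preimage_eq_mul _ _ (measurableSet_singleton 1)
      (measurableSet_singleton 1)]
    rw [show X i ⁻¹' {1} = {ω | X i ω = 1} from rfl, show Y i ⁻¹' {1} = {ω | Y i ω = 1} from rfl,
      hXp i, hYq i, ← ENNReal.ofReal_mul hp0.le]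
  have hC1 : ∀ i, μ {ω | C i ω = 1} = ENNReal.ofReal ((1 - p) * q) := by
    intro i
    have hset : {ω | C i ω = 1} = X i ⁻¹' {0} ∩ Y i ⁻¹' {1} := by
      ext ω; rcases hX01 i ω with h | h <;> rcases hY01 i ω with h' | h' <;>
        simp [hCdef, h, h']
    rw [hset, (hXYindep i i).measure_inter_preimage_eq_mul _ _ (measurableSet_singleton 0)
      (measurableSet_singleton 1)]
    rw [show X i ⁻¹' {0} = {ω | X i ω = 0} from rfl, show Y i ⁻¹' {1} = {ω | Y i ω = 1} from rfl,
      hX0 i, hYq i, ← ENNReal.ofReal_mul (by linarith)]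
  have hD1 : ∀ i, μ {ω | D i ω = 1} = ENNReal.ofReal ((1 - p) * (1 - q)) := by
    intro i
    have hset : {ω | D i ω = 1} = X i ⁻¹' {0} ∩ Y i ⁻¹' {0} := by
      ext ω; rcases hX01 i ω with h | h <;> rcases hY01 i ω with h' | h' <;>
        simp [hDdef, h, h']
    rw [hset, (hXYindep i i).measure_inter_preimage_eq_mul _ _ (measurableSet_singleton 0)
      (measurableSet_singleton 0)]
    rw [show X i ⁻¹' {0} = {ω | X i ω = 0} from rfl, show Y i ⁻¹' {0} = {ω | Y i ω = 0} from rfl,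
      hX0 i, hY0 i, ← ENNReal.ofReal_mul (by linarith)]
  have hE1 : ∀ i, μ {ω | E i ω = 1} = ENNReal.ofReal (1 - p) := by
    intro i
    have hset : {ω | E i ω = 1} = {ω | X i ω = 0} := by
      ext ω; simp [hEdef, sub_eq_iff_eq_add]
    rw [hset, hX0 i]
  -- pairwise independence
  have hpairAB : ∀ i j : ℕ, i ≠ j → ∀ φ ψ : ℝ × ℝ → ℝ, Measurable φ → Measurable ψ →
      IndepFun (fun ω => φ (X i ω, Y i ω)) (fun ω => ψ (X j ω, Y j ω)) μ := by
    intro i j hij φ ψ hφ hψ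
    exact (hindep.indepFun_prodMk_prodMk hFmeas (Sum.inl i) (Sum.inr i) (Sum.inl j)
      (Sum.inr j) (by simp [hij]) (by simp) (by simp) (by simp [hij])).comp hφ hψ
  have hAindep : Pairwise (Function.onFun (IndepFun · · μ) A) := fun i j hij =>
    hpairAB i j hij (fun pr => pr.1 * pr.2) (fun pr => pr.1 * pr.2)
      (measurable_fst.mul measurable_snd) (measurable_fst.mul measurable_snd)
  have hBindep : Pairwise (Function.onFun (IndepFun · · μ) B) := fun i j hij =>
    hindep.indepFun (show (Sum.inl i : ℕ ⊕ ℕ) ≠ Sum.inl j by simp [hij])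
  have hCindep : Pairwise (Function.onFun (IndepFun · · μ) C) := fun i j hij =>
    hpairAB i j hij (fun pr => (1 - pr.1) * pr.2) (fun pr => (1 - pr.1) * pr.2)
      ((measurable_const.sub measurable_fst).mul measurable_snd)
      ((measurable_const.sub measurable_fst).mul measurable_snd)
  have hDindep : Pairwise (Function.onFun (IndepFun · · μ) D) := fun i j hij =>
    hpairAB i j hij (fun pr => (1 - pr.1) * (1 - pr.2)) (fun pr => (1 - pr.1) * (1 - pr.2))
      ((measurable_const.sub measurable_fst).mul (measurable_const.sub measurable_snd))
      ((measurable_const.sub measurable_fst).mul (measurable_const.sub measurable_snd))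
  have hEindep : Pairwise (Function.onFun (IndepFun · · μ) E) := fun i j hij =>
    ((hindep.indepFun (show (Sum.inl i : ℕ ⊕ ℕ) ≠ Sum.inl j by simp [hij])).comp
      (measurable_const.sub measurable_id) (measurable_const.sub measurable_id))
  -- apply SLLN to each
  have slln : ∀ (Z : ℕ → Ω → ℝ), (∀ i, Measurable (Z i)) → (∀ i ω, Z i ω = 0 ∨ Z i ω = 1) →
      Pairwise (Function.onFun (IndepFun · · μ) Z) → ∀ (r : ℝ), 0 ≤ r →
      (∀ i, μ {ω | Z i ω = 1} = ENNReal.ofReal r) →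
      ∀ᵐ ω ∂μ, Tendsto (fun n : ℕ => (∑ i ∈ Finset.range n, Z i ω) / n) atTop (𝓝 r) := by
    intro Z hm h01 hpind r hr hmeas
    have hint : Integrable (Z 0) μ := bern_integrable μ (Z 0) (hm 0) (h01 0)
    have hident : ∀ i, IdentDistrib (Z i) (Z 0) μ μ := fun i =>
      bern_identDistrib μ (Z i) (Z 0) (hm i) (hm 0) (h01 i) (h01 0)
        (by rw [hmeas i, hmeas 0])
    have hE0 : μ[Z 0] = r := by
      rw [bern_integral μ (Z 0) (hm 0) (h01 0), hmeas 0, ENNReal.toReal_ofReal hr]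
    have := strong_law_ae_real Z hint hpind hident
    rwa [hE0] at this
  have hA' := slln A hAm hA01 hAindep (p * q) (by positivity) hA1
  have hB' := slln B hBm (fun i ω => hX01 i ω) hBindep p hp0.le (fun i => hXp i)
  have hC' := slln C hCm hC01 hCindep ((1 - p) * q) (by nlinarith) hC1
  have hD' := slln D hDm hD01 hDindep ((1 - p) * (1 - q)) (by nlinarith) hD1
  have hE' := slln E hEm hE01 hEindep (1 - p) (by linarith) hE1
  filter_upwards [hA', hB', hC', hD', hE'] with ω tA tB tC tD tE
  -- deterministic part
  have h1p : (1:ℝ) - p ≠ 0 := by linarith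
  -- limits of the value estimates
  have hnum1 : Tendsto (fun n : ℕ => (s0 + ∑ i ∈ Finset.range n, A i ω) / n) atTop (𝓝 (p * q)) := by
    have := (tendsto_const_div_atTop_nhds_zero_nat s0).add tA
    simpa [add_div] using this
  have hden1 : Tendsto (fun n : ℕ => (s0 + s1 + ∑ i ∈ Finset.range n, B i ω) / n) atTop (𝓝 p) := by
    have := (tendsto_const_div_atTop_nhds_zero_nat (s0 + s1)).add tB
    simpa [add_div] using this
  have hnum2 : Tendsto (fun n : ℕ =>
      (s2 + ∑ i ∈ Finset.range n, C i ω + γ * (s3 + ∑ i ∈ Finset.range n, D i ω)) / n) atTop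
      (𝓝 ((1 - p) * q + γ * ((1 - p) * (1 - q)))) := by
    have h3 : Tendsto (fun n : ℕ => (s3 + ∑ i ∈ Finset.range n, D i ω) / n) atTop
        (𝓝 ((1 - p) * (1 - q))) := by
      have := (tendsto_const_div_atTop_nhds_zero_nat s3).add tD
      simpa [add_div] using this
    have h2 : Tendsto (fun n : ℕ => (s2 + ∑ i ∈ Finset.range n, C i ω) / n) atTop
        (𝓝 ((1 - p) * q)) := by
      have := (tendsto_const_div_atTop_nhds_zero_nat s2).add tC
      simpa [add_div] using this
    have := h2.add (h3.const_mul γ)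
    simp only [add_div, mul_div_assoc] at this ⊢
    convert this using 2
  have hden2 : Tendsto (fun n : ℕ => (s2 + s3 + ∑ i ∈ Finset.range n, E i ω) / n) atTop
      (𝓝 (1 - p)) := by
    have := (tendsto_const_div_atTop_nhds_zero_nat (s2 + s3)).add tE
    simpa [add_div] using this
  -- the normalized ratios
  have hvH : Tendsto (fun n : ℕ =>
      β * ((s0 + ∑ i ∈ Finset.range n, A i ω) / n) /
        ((s0 + s1 + ∑ i ∈ Finset.range n, B i ω) / n)) atTop (𝓝 (β * (p * q) / p)) :=
    (hnum1.const_mul β).div hden1 hp0.ne'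
  have hvL : Tendsto (fun n : ℕ =>
      ((s2 + ∑ i ∈ Finset.range n, C i ω + γ * (s3 + ∑ i ∈ Finset.range n, D i ω)) / n) /
        ((s2 + s3 + ∑ i ∈ Finset.range n, E i ω) / n)) atTop
      (𝓝 (((1 - p) * q + γ * ((1 - p) * (1 - q))) / (1 - p))) :=
    hnum2.div hden2 h1p
  -- eventual equality with the original expressions
  have heqH : (fun n : ℕ =>
      β * ((s0 + ∑ i ∈ Finset.range n, A i ω) / n) /
        ((s0 + s1 + ∑ i ∈ Finset.range n, B i ω) / n)) =ᶠ[atTop]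
      (fun n : ℕ => β * (s0 + ∑ i ∈ Finset.range n, A i ω) /
        (s0 + s1 + ∑ i ∈ Finset.range n, B i ω)) := by
    filter_upwards [eventually_ge_atTop 1] with n hn
    have hn' : (n : ℝ) ≠ 0 := Nat.cast_ne_zero.mpr (by omega)
    rw [mul_div_assoc', div_ratio_aux _ _ _ hn']
  have heqL : (fun n : ℕ =>
      ((s2 + ∑ i ∈ Finset.range n, C i ω + γ * (s3 + ∑ i ∈ Finset.range n, D i ω)) / n) /
        ((s2 + s3 + ∑ i ∈ Finset.range n, E i ω) / n)) =ᶠ[atTop]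
      (fun n : ℕ => (s2 + ∑ i ∈ Finset.range n, C i ω + γ * (s3 + ∑ i ∈ Finset.range n, D i ω)) /
        (s2 + s3 + ∑ i ∈ Finset.range n, E i ω)) := by
    filter_upwards [eventually_ge_atTop 1] with n hn
    have hn' : (n : ℝ) ≠ 0 := Nat.cast_ne_zero.mpr (by omega)
    rw [div_ratio_aux _ _ _ hn']
  have hvH' := hvH.congr' heqH
  have hvL' := hvL.congr' heqL
  -- positivity of the limit gap
  have hgap : β * (p * q) / p < ((1 - p) * q + γ * ((1 - p) * (1 - q))) / (1 - p) := by
    have e1 : β * (p * q) / p = β * q := by field_simp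
    have e2 : ((1 - p) * q + γ * ((1 - p) * (1 - q))) / (1 - p) = q + γ * (1 - q) := by
      field_simp
    rw [e1, e2]
    nlinarith [mul_pos (sub_pos.mpr hβ1) hq0, mul_pos hγ0 (sub_pos.mpr hq1)]
  have hfin := (hvL'.sub hvH').eventually_const_lt (sub_pos.mpr hgap)
  have : ∀ᶠ n in atTop, β * (s0 + ∑ i ∈ Finset.range n, A i ω) /
        (s0 + s1 + ∑ i ∈ Finset.range n, B i ω) <
      (s2 + ∑ i ∈ Finset.range n, C i ω + γ * (s3 + ∑ i ∈ Finset.range n, D i ω)) /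
        (s2 + s3 + ∑ i ∈ Finset.range n, E i ω) := by
    filter_upwards [hfin] with n hn
    linarith
  obtain ⟨N, hN⟩ := eventually_atTop.mp this
  exact ⟨N, fun n hn => hN n hn⟩
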